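/- Let V be a real vector space equipped with a hypercomplex structure (I, J), K := I∘J, and let Ω : V × V → ℂ be an ℝ-bilinear alternating form such that Ω(IX, Y) = i·Ω(X, Y) for all X, Y (type (2,0) with respect to I), conj(Ω(JX, JY)) = Ω(X, Y) for all X, Y (q-real), and Ω(X, JX) > 0 for all X ≠ 0 (q-positive; the value Ω(X, JX) is automatically real by q-realness). Then g(X, Y) := 2·Re Ω(X, JY) defines a hyperhermitian inner product on V whose fundamental form is Ω, and g is the unique hyperhermitian inner product with fundamental form Ω. Consequently, the assignment g ↦ Ω is a bijection between hyperhermitian inner products on (V, I, J) and ℝ-bilinear alternating complex-valued forms on V that are of type (2,0) with respect to I, q-real and q-positive. -/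
import Mathlib


open ComplexOrder

/-- `B` is a hyperhermitian inner product on `(V, I, J)` whose fundamental
`(2,0)`-form `(B(JX,Y) + i·B(KX,Y))/2` (with `K := I∘J`) equals `Ω`. -/
def IsHyperHermitianWithFundForm {V : Type*} [AddCommGroup V] [Module ℝ V]
    (I J : Module.End ℝ V) (Ω : V →ₗ[ℝ] V →ₗ[ℝ] ℂ)
    (B : V →ₗ[ℝ] V →ₗ[ℝ] ℝ) : Prop :=
  (∀ X Y : V, B X Y = B Y X) ∧
  (∀ X : V, X ≠ 0 → 0 < B X X) ∧
  (∀ X Y : V, B (I X) (I Y) = B X Y) ∧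
  (∀ X Y : V, B (J X) (J Y) = B X Y) ∧
  (∀ X Y : V, ((B (J X) Y : ℂ) + Complex.I * (B ((I * J) X) Y : ℂ)) / 2 = Ω X Y)

/-- given an ℝ-bilinear alternating `Ω : V × V → ℂ` of type `(2,0)`
w.r.t. `I`, q-real and q-positive, the formula `g(X,Y) := 2·Re Ω(X, JY)` defines
the unique hyperhermitian inner product on `(V, I, J)` with fundamental form `Ω`;
hence `g ↦ Ω` is a bijection between hyperhermitian inner products and q-real,
q-positive `(2,0)`-forms. -/
theorem existsUnique_hyperhermitian_of_fundForm
    {V : Type*} [AddCommGroup V] [Module ℝ V]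
    (I J : Module.End ℝ V)
    (hI : I * I = -1) (hJ : J * J = -1) (hIJ : I * J = -(J * I))
    (Ω : V →ₗ[ℝ] V →ₗ[ℝ] ℂ)
    (halt : ∀ X Y : V, Ω X Y = -(Ω Y X))
    (htype : ∀ X Y : V, Ω (I X) Y = Complex.I * Ω X Y)
    (hqreal : ∀ X Y : V, (starRingEnd ℂ) (Ω (J X) (J Y)) = Ω X Y)
    (hqpos : ∀ X : V, X ≠ 0 → 0 < Ω X (J X)) :
    (∃! B : V →ₗ[ℝ] V →ₗ[ℝ] ℝ, IsHyperHermitianWithFundForm I J Ω B) ∧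
    (∀ B : V →ₗ[ℝ] V →ₗ[ℝ] ℝ, IsHyperHermitianWithFundForm I J Ω B →
      ∀ X Y : V, B X Y = 2 * (Ω X (J Y)).re) := by
  -- pointwise versions of the algebraic relations
  have hJJ : ∀ X : V, J (J X) = -X := fun X => by
    have := congrArg (fun f : Module.End ℝ V => f X) hJ
    simpa using this
  have hJI : ∀ X : V, J (I X) = -(I (J X)) := fun X => by
    have h2 : I (J X) = -(J (I X)) := by
      have := congrArg (fun f : Module.End ℝ V => f X) hIJ
      simpa using this
    simp [h2]
  -- q-real rewritten
  have hqreal' : ∀ X Y : V, Ω (J X) (J Y) = (starRingEnd ℂ) (Ω X Y) := fun X Y => by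
    rw [← hqreal X Y]; simp
  -- key: Ω X (J Y) = -conj (Ω (J X) Y)
  have hkey : ∀ X Y : V, Ω X (J Y) = -(starRingEnd ℂ) (Ω (J X) Y) := by
    intro X Y
    have h := hqreal X (J Y)
    rw [hJJ Y] at h
    simp only [map_neg] at h
    exact h.symm
  have hkeyre : ∀ X Y : V, (Ω X (J Y)).re = -(Ω (J X) Y).re := fun X Y => by
    rw [hkey]; simp
  -- candidate bilinear form
  set B : V →ₗ[ℝ] V →ₗ[ℝ] ℝ := LinearMap.mk₂ ℝ (fun X Y => 2 * (Ω X (J Y)).re)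
    (fun X X' Y => by simp [mul_add])
    (fun c X Y => by simp [Complex.smul_re]; ring)
    (fun X Y Y' => by simp [mul_add])
    (fun c X Y => by simp [Complex.smul_re]; ring) with hB
  have hBapp : ∀ X Y : V, B X Y = 2 * (Ω X (J Y)).re := fun X Y => rfl
  -- uniqueness: any hyperhermitian form with fundamental form Ω is given by this formula
  have huniq : ∀ B' : V →ₗ[ℝ] V →ₗ[ℝ] ℝ, IsHyperHermitianWithFundForm I J Ω B' →
      ∀ X Y : V, B' X Y = 2 * (Ω X (J Y)).re := by
    rintro B' ⟨-, -, -, -, h5⟩ X Y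
    have h := h5 (-(J X)) Y
    rw [div_eq_iff (two_ne_zero' ℂ)] at h
    have hre := congrArg Complex.re h
    simp only [map_neg, LinearMap.neg_apply, hJJ X, neg_neg] at hre
    simp only [Complex.add_re, Complex.ofReal_re, Complex.mul_re, Complex.I_re,
      Complex.I_im, Complex.ofReal_im, Complex.neg_re, Complex.neg_im,
      zero_mul, one_mul, mul_zero, sub_zero, zero_sub, add_zero,
      Complex.re_ofNat, Complex.im_ofNat] at hre
    norm_num at hre
    rw [hkeyre]
    linarith [hre]
  refine ⟨⟨B, ?_, fun B' hB' => ?_⟩, huniq⟩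
  · -- B is hyperhermitian with fundamental form Ω
    refine ⟨?_, ?_, ?_, ?_, ?_⟩
    · -- symmetric
      intro X Y
      rw [hBapp, hBapp, hkeyre Y X]
      have := halt X (J Y)
      have h2 : (Ω X (J Y)).re = -(Ω (J Y) X).re := by rw [this]; simp
      rw [h2]
    · -- positive
      intro X hX
      have := hqpos X hX
      rw [Complex.lt_def] at this
      rw [hBapp]
      have h1 : (0:ℂ).re < (Ω X (J X)).re := this.1
      simp only [Complex.zero_re] at h1
      linarith
    · -- I-invariance
      intro X Y
      rw [hBapp, hBapp, hJI Y]
      have : Ω (I X) (-(I (J Y))) = Ω X (J Y) := by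
        rw [map_neg, htype]
        have h2 : Ω X (I (J Y)) = Complex.I * Ω X (J Y) := by
          rw [halt X (I (J Y)), htype, halt (J Y) X]; ring
        rw [h2]
        have : Complex.I * (Complex.I * Ω X (J Y)) = -Ω X (J Y) := by
          rw [← mul_assoc, Complex.I_mul_I]; ring
        rw [this, neg_neg]
      rw [this]
    · -- J-invariance
      intro X Y
      rw [hBapp, hBapp, hJJ Y, hkeyre X Y]
      simp
    · -- fundamental form
      intro X Y
      rw [hBapp, hBapp]
      have e1 : Ω (J X) (J Y) = (starRingEnd ℂ) (Ω X Y) := hqreal' X Y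
      have e2 : ((I * J) X : V) = I (J X) := rfl
      have e3 : Ω (I (J X)) (J Y) = Complex.I * (starRingEnd ℂ) (Ω X Y) := by
        rw [htype, e1]
      rw [e2, e3, e1]
      have hre : ((starRingEnd ℂ) (Ω X Y)).re = (Ω X Y).re := by simp
      have him : (Complex.I * (starRingEnd ℂ) (Ω X Y)).re = (Ω X Y).im := by
        simp [Complex.mul_re]
      rw [hre, him]
      rw [div_eq_iff (two_ne_zero' ℂ)]
      apply Complex.ext <;> simp <;> ring
  · -- uniqueness
    apply LinearMap.ext; intro X; apply LinearMap.ext; intro Y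
    rw [huniq B' hB' X Y, hBapp]
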